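/- The eigenvalues of the symbol σ above are nonnegative when P is positive definite: in particular, taking P = Id and ζ = e₁, the operator g̃ ↦ σ(g̃) acting on symmetric 3×3 matrices has all eigenvalues ≥ 0. -/

import Mathlib

open Matrix

/-- With `P = Id` and `ζ = e₁`, every eigenvalue of the symbol
`σ(g̃)_{ij} = -Σ_{m,ℓ} P^{mℓ}(ζ_i ζ_m g̃_{ℓj} + ζ_ℓ ζ_j g̃_{im} - ζ_i ζ_j g̃_{ℓm} - ζ_ℓ ζ_m g̃_{ij})`
acting on symmetric 3×3 matrices is nonnegative. -/
theorem symbol_eigenvalues_nonneg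
    (P : Matrix (Fin 3) (Fin 3) ℝ) (hP : P = 1)
    (ζ : Fin 3 → ℝ) (hζ : ζ = fun i => if i = 0 then 1 else 0)
    (gt : Matrix (Fin 3) (Fin 3) ℝ) (hgt : gt.IsSymm) (hne : gt ≠ 0)
    (μ : ℝ)
    (heig : ∀ i j, (-(∑ m, ∑ l, P m l *
        (ζ i * ζ m * gt l j + ζ l * ζ j * gt i m
          - ζ i * ζ j * gt l m - ζ l * ζ m * gt i j))) = μ * gt i j) :
    0 ≤ μ := by
  subst hP hζ
  by_contra h
  push_neg at h
  have h00 := heig 0 0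
  have h01 := heig 0 1
  have h02 := heig 0 2
  have h10 := heig 1 0
  have h11 := heig 1 1
  have h12 := heig 1 2
  have h20 := heig 2 0
  have h21 := heig 2 1
  have h22 := heig 2 2
  simp [Fin.sum_univ_three, Matrix.one_apply] at h00 h01 h02 h10 h11 h12 h20 h21 h22
  have hμ0 : μ ≠ 0 := by linarith
  have hμ1 : μ ≠ 1 := by linarith
  have g11 : gt 1 1 = 0 := by
    rcases mul_eq_zero.mp (show (μ - 1) * gt 1 1 = 0 by linarith) with h' | h'
    · exact absurd (by linarith) hμ1
    · exact h'
  have g22 : gt 2 2 = 0 := by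
    rcases mul_eq_zero.mp (show (μ - 1) * gt 2 2 = 0 by linarith) with h' | h'
    · exact absurd (by linarith) hμ1
    · exact h'
  have g12 : gt 1 2 = 0 := by
    rcases mul_eq_zero.mp (show (μ - 1) * gt 1 2 = 0 by linarith) with h' | h'
    · exact absurd (by linarith) hμ1
    · exact h'
  have g21 : gt 2 1 = 0 := by
    rcases mul_eq_zero.mp (show (μ - 1) * gt 2 1 = 0 by linarith) with h' | h'
    · exact absurd (by linarith) hμ1
    · exact h'
  have g01 : gt 0 1 = 0 := h01.resolve_left hμ0
  have g02 : gt 0 2 = 0 := h02.resolve_left hμ0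
  have g10 : gt 1 0 = 0 := h10.resolve_left hμ0
  have g20 : gt 2 0 = 0 := h20.resolve_left hμ0
  have g00 : gt 0 0 = 0 := by
    rcases mul_eq_zero.mp (show μ * gt 0 0 = 0 by linarith) with h' | h'
    · exact absurd h' hμ0
    · exact h'
  apply hne
  ext i j
  fin_cases i <;> fin_cases j <;>
    simp [g00, g01, g02, g10, g11, g12, g20, g21, g22]
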